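/- Let A be a finite-dimensional commutative algebra over a field k. Then the set of idempotent elements of A is finite. -/

import Mathlib

lemma nilsub_eq {A : Type*} [CommRing A] {e f : A} (he : e*e = e) (hf : f*f = f)
    (h : IsNilpotent (e - f)) : e = f := by
  set d := e - f with hd
  have h3 : d^3 = d := by
    show (e-f)^3 = e - f
    linear_combination (e+1-3*f)*he + (3*e-f-1)*hf
  have hn2 : IsNilpotent (d^2) := by
    obtain ⟨n, hn⟩ := h
    exact ⟨n, by rw [← pow_mul, mul_comm, pow_mul, hn]; simp⟩
  have hu : IsUnit (1 - d^2) := hn2.isUnit_one_sub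
  have hz : d * (1 - d^2) = 0 := by
    have : d * (1 - d^2) = d - d^3 := by ring
    rw [this, h3, sub_self]
  have : d = 0 := (hu.mul_left_eq_zero).mp hz
  exact sub_eq_zero.mp this

/-- The set of idempotents of a finite-dimensional commutative algebra over a field is finite. -/
theorem idempotents_finite (k A : Type*) [Field k] [CommRing A] [Algebra k A]
    [FiniteDimensional k A] : {e : A | e * e = e}.Finite := by
  haveI : IsArtinianRing A := isArtinian_of_tower k inferInstance
  have hS : {I : Ideal A | I.IsPrime}.Finite := IsArtinianRing.setOfPred_isPrime_finite A
  haveI := hS.to_subtype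
  have : Finite ({I : Ideal A | I.IsPrime} → Prop) := inferInstance
  rw [Set.finite_coe_iff] at *
  apply Set.Finite.of_finite_image (f := fun e => fun I : {I : Ideal A | I.IsPrime} => e ∈ I.1)
  · exact Set.Finite.subset (Set.finite_univ) (Set.subset_univ _)
  · intro e he f hf hef
    have key : ∀ I : Ideal A, I.IsPrime → (e - f) ∈ I := by
      intro I hI
      have hmem : e ∈ I ↔ f ∈ I := by
        have := congrFun hef ⟨I, hI⟩
        simp only [eq_iff_iff] at this
        exact this
      by_cases hel : e ∈ I
      · exact I.sub_mem hel (hmem.mp hel)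
      · have h1e : 1 - e ∈ I := by
          rcases hI.mem_or_mem (show e * (1 - e) ∈ I by rw [mul_sub, mul_one, he, sub_self]; exact I.zero_mem) with h | h
          · exact absurd h hel
          · exact h
        have h1f : 1 - f ∈ I := by
          rcases hI.mem_or_mem (show f * (1 - f) ∈ I by rw [mul_sub, mul_one, hf, sub_self]; exact I.zero_mem) with h | h
          · exact absurd (hmem.mpr h) hel
          · exact h
        have : (1 - f) - (1 - e) ∈ I := I.sub_mem h1f h1e
        simpa using this
    exact nilsub_eq he hf (nilpotent_iff_mem_prime.mpr key)
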